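/- For every tournament T, every vertex v of T, and every minimal feedback vertex set F of T - v, either F or F ∪ {v} is a minimal feedback vertex set of T. -/

import Mathlib

/-- A set `W` of vertices is acyclic if the digraph `r` restricted to `W`
has no directed cycle (the transitive closure restricted to `W` is irreflexive). -/
def AcyclicOn {V : Type*} (r : V → V → Prop) (W : Set V) : Prop :=
  ∀ v : V, ¬ Relation.TransGen (fun a b => a ∈ W ∧ b ∈ W ∧ r a b) v v

/-- A tournament: an irreflexive relation with exactly one arc between
every pair of distinct vertices. -/
def IsTournament {V : Type*} (r : V → V → Prop) : Prop :=
  (∀ v : V, ¬ r v v) ∧ ∀ u v : V, u ≠ v → (r u v ↔ ¬ r v u)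

/-- A feedback vertex set: its deletion leaves an acyclic digraph. -/
def IsFVS {V : Type*} (r : V → V → Prop) (F : Set V) : Prop :=
  AcyclicOn r Fᶜ

/-- A minimal feedback vertex set. -/
def IsMinimalFVS {V : Type*} (r : V → V → Prop) (F : Set V) : Prop :=
  IsFVS r F ∧ ∀ F' : Set V, F' ⊆ F → IsFVS r F' → F' = F

/-- A feedback vertex set of the subtournament induced on `S`. -/
def IsFVSOn {V : Type*} (r : V → V → Prop) (S F : Set V) : Prop :=
  F ⊆ S ∧ AcyclicOn r (S \ F)

/-- A minimal feedback vertex set of the subtournament induced on `S`. -/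
def IsMinimalFVSOn {V : Type*} (r : V → V → Prop) (S F : Set V) : Prop :=
  IsFVSOn r S F ∧ ∀ F' : Set V, F' ⊆ F → IsFVSOn r S F' → F' = F

/-- Strong (strongly connected): a directed path between any ordered pair. -/
def IsStrong {V : Type*} (r : V → V → Prop) : Prop :=
  ∀ u v : V, Relation.ReflTransGen r u v

/-- The subtournament induced on `S` is strong. -/
def IsStrongOn {V : Type*} (r : V → V → Prop) (S : Set V) : Prop :=
  ∀ u ∈ S, ∀ v ∈ S, Relation.ReflTransGen (fun a b => a ∈ S ∧ b ∈ S ∧ r a b) u v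

/-- The score (out-degree) of a vertex. -/
noncomputable def outScore {V : Type*} (r : V → V → Prop) (v : V) : ℕ :=
  {u : V | r v u}.ncard

/-- The number of minimal feedback vertex sets of a tournament. -/
noncomputable def fvsCount (V : Type*) (r : V → V → Prop) : ℕ :=
  {F : Set V | IsMinimalFVS r F}.ncard

/-- `maxMinFVS n` = maximum number of minimal FVSs over all `n`-vertex tournaments. -/
noncomputable def maxMinFVS (n : ℕ) : ℕ :=
  sSup {k : ℕ | ∃ r : Fin n → Fin n → Prop, IsTournament r ∧ fvsCount (Fin n) r = k}



lemma acyclicOn_mono {V : Type*} {r : V → V → Prop} {W W' : Set V}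
    (h : AcyclicOn r W) (hsub : W' ⊆ W) : AcyclicOn r W' := by
  intro x hx
  exact h x (Relation.TransGen.mono (fun a b ⟨ha, hb, hab⟩ => ⟨hsub ha, hsub hb, hab⟩) x x hx)

/-- For every tournament `T`, vertex `v`, and minimal FVS `F` of `T - v`,
either `F` or `F ∪ {v}` is a minimal FVS of `T`. -/
theorem stmt7 {V : Type*} [Fintype V] (r : V → V → Prop) (hT : IsTournament r)
    (v : V) (F : Set V) (hF : IsMinimalFVSOn r {v}ᶜ F) :
    IsMinimalFVS r F ∨ IsMinimalFVS r (insert v F) := by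
  obtain ⟨⟨hFsub, hFacyc⟩, hFmin⟩ := hF
  by_cases hc : AcyclicOn r Fᶜ
  · left
    refine ⟨hc, fun F' hF'sub hF'fvs => ?_⟩
    refine hFmin F' hF'sub ⟨hF'sub.trans hFsub, ?_⟩
    exact acyclicOn_mono hF'fvs (fun x hx => hx.2)
  · right
    have hkey : ((insert v F : Set V))ᶜ = {v}ᶜ \ F := by
      ext x; simp [Set.mem_compl_iff, Set.mem_insert_iff, and_comm, not_or]
    constructor
    · show AcyclicOn r (insert v F)ᶜ
      rw [hkey]; exact hFacyc
    · intro F' hF'sub hF'fvs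
      by_cases hv : v ∈ F'
      · have hsub2 : F' \ {v} ⊆ F := by
          intro x hx
          rcases hF'sub hx.1 with h | h
          · exact absurd h hx.2
          · exact h
        have : F' \ {v} = F := by
          refine hFmin _ hsub2 ⟨hsub2.trans hFsub, ?_⟩
          refine acyclicOn_mono hF'fvs ?_
          intro x hx
          simp only [Set.mem_diff, Set.mem_compl_iff, Set.mem_singleton_iff] at *
          exact fun hxF' => hx.2 ⟨hxF', hx.1⟩
        rw [← this]
        ext x
        simp only [Set.mem_insert_iff, Set.mem_diff, Set.mem_singleton_iff]
        constructor
        · intro h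
          by_cases hxv : x = v
          · exact Or.inl hxv
          · exact Or.inr ⟨h, hxv⟩
        · rintro (rfl | h)
          · exact hv
          · exact h.1
      · exfalso
        apply hc
        have hsub2 : F' ⊆ F := fun x hx => (hF'sub hx).resolve_left (fun h => hv (h ▸ hx))
        exact acyclicOn_mono hF'fvs (fun x hx h => hx (hsub2 h))
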